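/- The graph K'_{n,n} obtained from K_{n,n} by subdividing one edge satisfies def(K'_{n,n}) = 1 for every n ≥ 2. -/
import Mathlib


open scoped Classical

/-- A proper edge-coloring: distinct edges sharing a vertex receive distinct colors. -/
def IsProperEdgeColoring {V : Type*} (G : SimpleGraph V) (c : Sym2 V → ℕ) : Prop :=
  ∀ e ∈ G.edgeSet, ∀ e' ∈ G.edgeSet, e ≠ e' → (∃ v, v ∈ e ∧ v ∈ e') → c e ≠ c e'

/-- A proper `t`-edge-coloring: proper, colors lie in `{1,…,t}`, and all colors are used. -/
def IsProperTEdgeColoring {V : Type*} (G : SimpleGraph V) (t : ℕ) (c : Sym2 V → ℕ) : Prop :=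
  IsProperEdgeColoring G c ∧ (∀ e ∈ G.edgeSet, c e ∈ Finset.Icc 1 t) ∧
    ∀ k ∈ Finset.Icc 1 t, ∃ e ∈ G.edgeSet, c e = k

/-- The vSpectrum of a vertex: the set of colors appearing on edges incident to `v`. -/
noncomputable def vSpectrum {V : Type*} [Fintype V] (G : SimpleGraph V) (c : Sym2 V → ℕ)
    (v : V) : Finset ℕ :=
  (Finset.univ.filter (fun u => G.Adj v u)).image (fun u => c s(v, u))

/-- The deficiency of a finite set of naturals: `max S − min S − |S| + 1`. -/
def setDef (S : Finset ℕ) : ℕ := (S.max.getD 0 - S.min.getD 0) - (S.card - 1)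

/-- The deficiency of a proper edge-coloring: the sum of vertex deficiencies. -/
noncomputable def colDef {V : Type*} [Fintype V] (G : SimpleGraph V) (c : Sym2 V → ℕ) : ℕ :=
  ∑ v, setDef (vSpectrum G c v)

/-- The deficiency of a graph: the minimum deficiency over all proper edge-colorings. -/
noncomputable def graphDef {V : Type*} [Fintype V] (G : SimpleGraph V) : ℕ :=
  sInf {d | ∃ c, IsProperEdgeColoring G c ∧ colDef G c = d}

/-- `w_def G`: the least `t` such that some proper `t`-edge-coloring attains `def(G)`. -/
noncomputable def wdef {V : Type*} [Fintype V] (G : SimpleGraph V) : ℕ :=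
  sInf {t | ∃ c, IsProperTEdgeColoring G t c ∧ colDef G c = graphDef G}

/-- `W_def G`: the greatest `t` such that some proper `t`-edge-coloring attains `def(G)`. -/
noncomputable def Wdef {V : Type*} [Fintype V] (G : SimpleGraph V) : ℕ :=
  sSup {t | ∃ c, IsProperTEdgeColoring G t c ∧ colDef G c = graphDef G}

/-- A graph is interval colorable if some proper edge-coloring has deficiency `0`. -/
def IntervalColorable {V : Type*} [Fintype V] (G : SimpleGraph V) : Prop :=
  ∃ c, IsProperEdgeColoring G c ∧ colDef G c = 0

/-- `w G`: the least `t` such that `G` has an interval `t`-coloring. -/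
noncomputable def wint {V : Type*} [Fintype V] (G : SimpleGraph V) : ℕ :=
  sInf {t | ∃ c, IsProperTEdgeColoring G t c ∧ colDef G c = 0}

/-- `W G`: the greatest `t` such that `G` has an interval `t`-coloring. -/
noncomputable def Wint {V : Type*} [Fintype V] (G : SimpleGraph V) : ℕ :=
  sSup {t | ∃ c, IsProperTEdgeColoring G t c ∧ colDef G c = 0}

/-- `K'_{n,n}`: the complete bipartite graph `K_{n,n}` with the edge `u_n v_n`
subdivided by a new vertex `w`.  Here `Sum.inl i` is `u_{i+1}`,
`Sum.inr (Sum.inl j)` is `v_{j+1}` and `Sum.inr (Sum.inr ())` is `w`. -/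
def Kprime (n : ℕ) : SimpleGraph (Fin n ⊕ Fin n ⊕ Unit) :=
  SimpleGraph.fromRel (fun a b =>
    (∃ i j : Fin n, a = Sum.inl i ∧ b = Sum.inr (Sum.inl j) ∧
      ¬(i.val = n - 1 ∧ j.val = n - 1)) ∨
    (∃ i : Fin n, i.val = n - 1 ∧ a = Sum.inl i ∧ b = Sum.inr (Sum.inr ())) ∨
    (∃ j : Fin n, j.val = n - 1 ∧ a = Sum.inr (Sum.inr ()) ∧ b = Sum.inr (Sum.inl j)))

lemma adj_inl (n : ℕ) (i : Fin n) (x : Fin n ⊕ Fin n ⊕ Unit) :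
    (Kprime n).Adj (Sum.inl i) x ↔
      (∃ j : Fin n, x = Sum.inr (Sum.inl j) ∧ ¬(i.val = n - 1 ∧ j.val = n - 1)) ∨
      (i.val = n - 1 ∧ x = Sum.inr (Sum.inr ())) := by
  simp only [Kprime, SimpleGraph.fromRel_adj]
  constructor
  · rintro ⟨hne, h | h⟩ <;> aesop
  · rintro (⟨j, rfl, h⟩ | ⟨h, rfl⟩) <;> aesop

lemma adj_inr (n : ℕ) (j : Fin n) (x : Fin n ⊕ Fin n ⊕ Unit) :
    (Kprime n).Adj (Sum.inr (Sum.inl j)) x ↔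
      (∃ i : Fin n, x = Sum.inl i ∧ ¬(i.val = n - 1 ∧ j.val = n - 1)) ∨
      (j.val = n - 1 ∧ x = Sum.inr (Sum.inr ())) := by
  simp only [Kprime, SimpleGraph.fromRel_adj]
  constructor
  · rintro ⟨hne, h | h⟩ <;> aesop
  · rintro (⟨i, rfl, h⟩ | ⟨h, rfl⟩) <;> aesop

lemma adj_w (n : ℕ) (x : Fin n ⊕ Fin n ⊕ Unit) :
    (Kprime n).Adj (Sum.inr (Sum.inr ())) x ↔
      (∃ i : Fin n, i.val = n - 1 ∧ x = Sum.inl i) ∨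
      (∃ j : Fin n, j.val = n - 1 ∧ x = Sum.inr (Sum.inl j)) := by
  simp only [Kprime, SimpleGraph.fromRel_adj]
  constructor
  · rintro ⟨hne, h | h⟩ <;> aesop
  · rintro (⟨i, h, rfl⟩ | ⟨j, h, rfl⟩) <;> aesop

def colf (n : ℕ) : (Fin n ⊕ Fin n ⊕ Unit) → (Fin n ⊕ Fin n ⊕ Unit) → ℕ
  | Sum.inl i, Sum.inr (Sum.inl j) => (i.val + j.val + 1) % n + 1
  | Sum.inr (Sum.inl j), Sum.inl i => (i.val + j.val + 1) % n + 1
  | Sum.inl _, Sum.inr (Sum.inr _) => n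
  | Sum.inr (Sum.inr _), Sum.inl _ => n
  | Sum.inr (Sum.inr _), Sum.inr (Sum.inl _) => n + 1
  | Sum.inr (Sum.inl _), Sum.inr (Sum.inr _) => n + 1
  | _, _ => 0

lemma colf_symm (n : ℕ) : ∀ a b, colf n a b = colf n b a := by
  rintro (i | j | u) (i' | j' | u') <;> rfl

noncomputable def col (n : ℕ) : Sym2 (Fin n ⊕ Fin n ⊕ Unit) → ℕ :=
  Sym2.lift ⟨colf n, colf_symm n⟩

@[simp] lemma col_mk (n : ℕ) (a b) : col n s(a, b) = colf n a b := rfl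

lemma add_mod_inj {n a j j' : ℕ} (hj : j < n) (hj' : j' < n)
    (h : (a + j) % n = (a + j') % n) : j = j' := by
  have h2 : j ≡ j' [MOD n] := Nat.ModEq.add_left_cancel' a h
  simpa [Nat.ModEq, Nat.mod_eq_of_lt hj, Nat.mod_eq_of_lt hj'] using h2

lemma colf_inj (n : ℕ) (hn : 2 ≤ n) (a b b' : Fin n ⊕ Fin n ⊕ Unit)
    (hab : (Kprime n).Adj a b) (hab' : (Kprime n).Adj a b') (hbb : b ≠ b') :
    colf n a b ≠ colf n a b' := by
  have hn0 : 0 < n := by omega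
  rcases a with i | j | u
  · rw [adj_inl] at hab hab'
    rcases hab with ⟨j, rfl, hj⟩ | ⟨hi, rfl⟩ <;>
      rcases hab' with ⟨j', rfl, hj'⟩ | ⟨hi', rfl⟩
    · have hjj : j ≠ j' := by rintro rfl; exact hbb rfl
      simp only [colf]
      intro h
      have h2 : (i.val + 1 + j.val) % n = (i.val + 1 + j'.val) % n := by
        have e1 : i.val + j.val + 1 = i.val + 1 + j.val := by omega
        have e2 : i.val + j'.val + 1 = i.val + 1 + j'.val := by omega
        rw [e1, e2] at h
        omega
      exact hjj (Fin.ext (add_mod_inj j.isLt j'.isLt h2))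
    · -- b = inr inl j, b' = w, i = last
      simp only [colf]
      have hjne : j.val < n - 1 := by
        have := j.isLt
        rcases Nat.lt_or_ge j.val (n-1) with h | h
        · exact h
        · exact absurd ⟨hi', by omega⟩ hj
      have e : (i.val + j.val + 1) % n = j.val := by
        have : i.val + j.val + 1 = n + j.val := by omega
        rw [this, Nat.add_mod_left, Nat.mod_eq_of_lt j.isLt]
      omega
    · simp only [colf]
      have hjne : j'.val < n - 1 := by
        have := j'.isLt
        rcases Nat.lt_or_ge j'.val (n-1) with h | h
        · exact h
        · exact absurd ⟨hi, by omega⟩ hj'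
      have e : (i.val + j'.val + 1) % n = j'.val := by
        have : i.val + j'.val + 1 = n + j'.val := by omega
        rw [this, Nat.add_mod_left, Nat.mod_eq_of_lt j'.isLt]
      omega
    · exact absurd rfl hbb
  · rw [adj_inr] at hab hab'
    rcases hab with ⟨i, rfl, hi⟩ | ⟨hj, rfl⟩ <;>
      rcases hab' with ⟨i', rfl, hi'⟩ | ⟨hj', rfl⟩
    · have hii : i ≠ i' := by rintro rfl; exact hbb rfl
      simp only [colf]
      intro h
      have h2 : (j.val + 1 + i.val) % n = (j.val + 1 + i'.val) % n := by
        have e1 : i.val + j.val + 1 = j.val + 1 + i.val := by omega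
        have e2 : i'.val + j.val + 1 = j.val + 1 + i'.val := by omega
        rw [e1, e2] at h
        omega
      exact hii (Fin.ext (add_mod_inj i.isLt i'.isLt h2))
    · simp only [colf]
      have := Nat.mod_lt (i.val + j.val + 1) hn0
      omega
    · simp only [colf]
      have := Nat.mod_lt (i'.val + j.val + 1) hn0
      omega
    · exact absurd rfl hbb
  · rw [adj_w] at hab hab'
    rcases hab with ⟨i, hi, rfl⟩ | ⟨j, hj, rfl⟩ <;>
      rcases hab' with ⟨i', hi', rfl⟩ | ⟨j', hj', rfl⟩
    · exact absurd (by rw [Fin.ext (by omega : i.val = i'.val)]) hbb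
    · simp only [colf]; omega
    · simp only [colf]; omega
    · exact absurd (by rw [Fin.ext (by omega : j.val = j'.val)]) hbb

lemma nbhd_inl {n : ℕ} (i : Fin n) (hi : i.val ≠ n - 1) :
    Finset.univ.filter (fun u => (Kprime n).Adj (Sum.inl i) u) =
      Finset.univ.image (fun j : Fin n => (Sum.inr (Sum.inl j) : Fin n ⊕ Fin n ⊕ Unit)) := by
  ext x
  simp only [Finset.mem_filter, Finset.mem_univ, true_and, Finset.mem_image, adj_inl]
  constructor
  · rintro (⟨j, rfl, h⟩ | ⟨h, rfl⟩)
    · exact ⟨j, rfl⟩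
    · exact absurd h hi
  · rintro ⟨j, rfl⟩
    exact Or.inl ⟨j, rfl, fun h => hi h.1⟩

lemma nbhd_inl_last {n : ℕ} (i : Fin n) (hi : i.val = n - 1) :
    Finset.univ.filter (fun u => (Kprime n).Adj (Sum.inl i) u) =
      insert (Sum.inr (Sum.inr ()))
        ((Finset.univ.filter (fun j : Fin n => j.val ≠ n - 1)).image
          (fun j : Fin n => (Sum.inr (Sum.inl j) : Fin n ⊕ Fin n ⊕ Unit))) := by
  ext x
  simp only [Finset.mem_filter, Finset.mem_univ, true_and, Finset.mem_image,
    Finset.mem_insert, adj_inl]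
  constructor
  · rintro (⟨j, rfl, h⟩ | ⟨h, rfl⟩)
    · exact Or.inr ⟨j, fun hj => h ⟨hi, hj⟩, rfl⟩
    · exact Or.inl rfl
  · rintro (rfl | ⟨j, hj, rfl⟩)
    · exact Or.inr ⟨hi, rfl⟩
    · exact Or.inl ⟨j, rfl, fun h => hj h.2⟩

lemma nbhd_inr {n : ℕ} (j : Fin n) (hj : j.val ≠ n - 1) :
    Finset.univ.filter (fun u => (Kprime n).Adj (Sum.inr (Sum.inl j)) u) =
      Finset.univ.image (fun i : Fin n => (Sum.inl i : Fin n ⊕ Fin n ⊕ Unit)) := by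
  ext x
  simp only [Finset.mem_filter, Finset.mem_univ, true_and, Finset.mem_image, adj_inr]
  constructor
  · rintro (⟨i, rfl, h⟩ | ⟨h, rfl⟩)
    · exact ⟨i, rfl⟩
    · exact absurd h hj
  · rintro ⟨i, rfl⟩
    exact Or.inl ⟨i, rfl, fun h => hj h.2⟩

lemma nbhd_inr_last {n : ℕ} (j : Fin n) (hj : j.val = n - 1) :
    Finset.univ.filter (fun u => (Kprime n).Adj (Sum.inr (Sum.inl j)) u) =
      insert (Sum.inr (Sum.inr ()))
        ((Finset.univ.filter (fun i : Fin n => i.val ≠ n - 1)).image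
          (fun i : Fin n => (Sum.inl i : Fin n ⊕ Fin n ⊕ Unit))) := by
  ext x
  simp only [Finset.mem_filter, Finset.mem_univ, true_and, Finset.mem_image,
    Finset.mem_insert, adj_inr]
  constructor
  · rintro (⟨i, rfl, h⟩ | ⟨h, rfl⟩)
    · exact Or.inr ⟨i, fun h2 => h ⟨h2, hj⟩, rfl⟩
    · exact Or.inl rfl
  · rintro (rfl | ⟨i, hi, rfl⟩)
    · exact Or.inr ⟨hj, rfl⟩
    · exact Or.inl ⟨i, rfl, fun h => hi h.1⟩

lemma nbhd_w {n : ℕ} (hn : 2 ≤ n) :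
    Finset.univ.filter (fun u => (Kprime n).Adj (Sum.inr (Sum.inr ())) u) =
      {Sum.inl (⟨n - 1, by omega⟩ : Fin n), Sum.inr (Sum.inl (⟨n - 1, by omega⟩ : Fin n))} := by
  ext x
  simp only [Finset.mem_filter, Finset.mem_univ, true_and, Finset.mem_insert,
    Finset.mem_singleton, adj_w]
  constructor
  · rintro (⟨i, hi, rfl⟩ | ⟨j, hjv, rfl⟩)
    · exact Or.inl (by congr 1; exact Fin.ext hi)
    · exact Or.inr (by congr 2; exact Fin.ext hjv)
  · rintro (rfl | rfl)
    · exact Or.inl ⟨_, rfl, rfl⟩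
    · exact Or.inr ⟨_, rfl, rfl⟩

lemma card_filter_ne_last {n : ℕ} (hn : 2 ≤ n) :
    (Finset.univ.filter (fun j : Fin n => j.val ≠ n - 1)).card = n - 1 := by
  have : Finset.univ.filter (fun j : Fin n => j.val ≠ n - 1) =
      Finset.univ.erase (⟨n - 1, by omega⟩ : Fin n) := by
    ext j
    simp [Fin.ext_iff]
  rw [this, Finset.card_erase_of_mem (Finset.mem_univ _)]
  simp

lemma card_nbhd_inl {n : ℕ} (hn : 2 ≤ n) (i : Fin n) :
    (Finset.univ.filter (fun u => (Kprime n).Adj (Sum.inl i) u)).card = n := by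
  have hinj : Function.Injective (fun j : Fin n => (Sum.inr (Sum.inl j) : Fin n ⊕ Fin n ⊕ Unit)) :=
    fun a b h => by simpa using h
  rcases eq_or_ne i.val (n - 1) with hi | hi
  · rw [nbhd_inl_last i hi, Finset.card_insert_of_notMem (by simp),
      Finset.card_image_of_injective _ hinj, card_filter_ne_last hn]
    omega
  · rw [nbhd_inl i hi, Finset.card_image_of_injective _ hinj]
    simp

lemma card_nbhd_inr {n : ℕ} (hn : 2 ≤ n) (j : Fin n) :
    (Finset.univ.filter (fun u => (Kprime n).Adj (Sum.inr (Sum.inl j)) u)).card = n := by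
  have hinj : Function.Injective (fun i : Fin n => (Sum.inl i : Fin n ⊕ Fin n ⊕ Unit)) :=
    fun a b h => by simpa using h
  rcases eq_or_ne j.val (n - 1) with hj | hj
  · rw [nbhd_inr_last j hj, Finset.card_insert_of_notMem (by simp),
      Finset.card_image_of_injective _ hinj, card_filter_ne_last hn]
    omega
  · rw [nbhd_inr j hj, Finset.card_image_of_injective _ hinj]
    simp

lemma col_proper {n : ℕ} (hn : 2 ≤ n) : IsProperEdgeColoring (Kprime n) (col n) := by
  intro e he e' he' hne hshare
  obtain ⟨v, hv, hv'⟩ := hshare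
  obtain ⟨b, rfl⟩ := Sym2.mem_iff_exists.mp hv
  obtain ⟨b', rfl⟩ := Sym2.mem_iff_exists.mp hv'
  rw [SimpleGraph.mem_edgeSet] at he he'
  have hbb : b ≠ b' := fun h => hne (by rw [h])
  simpa using colf_inj n hn v b b' he he' hbb

lemma max_getD_eq {S : Finset ℕ} {m : ℕ} (hm : m ∈ S) (h : ∀ x ∈ S, x ≤ m) :
    S.max.getD 0 = m := by
  have h1 : S.max = (m : WithBot ℕ) :=
    le_antisymm (Finset.max_le (fun a ha => WithBot.coe_le_coe.mpr (h a ha))) (Finset.le_max hm)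
  rw [h1]; rfl

lemma min_getD_eq {S : Finset ℕ} {m : ℕ} (hm : m ∈ S) (h : ∀ x ∈ S, m ≤ x) :
    S.min.getD 0 = m := by
  have h1 : S.min = (m : WithTop ℕ) :=
    le_antisymm (Finset.min_le hm) (Finset.le_min (fun a ha => WithTop.coe_le_coe.mpr (h a ha)))
  rw [h1]; rfl

lemma mem_vSpectrum {V : Type*} [Fintype V] (G : SimpleGraph V) (c : Sym2 V → ℕ) {v u : V}
    (h : G.Adj v u) : c s(v, u) ∈ vSpectrum G c v := by
  simp only [vSpectrum, Finset.mem_image]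
  exact ⟨u, by simp [h], rfl⟩

lemma card_vSpectrum {V : Type*} [Fintype V] (G : SimpleGraph V) (c : Sym2 V → ℕ) (v : V)
    (hc : IsProperEdgeColoring G c) :
    (vSpectrum G c v).card = (Finset.univ.filter (fun u => G.Adj v u)).card := by
  rw [vSpectrum, Finset.card_image_of_injOn]
  intro a ha b hb hab
  simp only [Finset.mem_coe, Finset.mem_filter, Finset.mem_univ, true_and] at ha hb
  by_contra hne
  have hedge : s(v, a) ≠ s(v, b) := by
    intro h
    rw [Sym2.eq_iff] at h
    rcases h with ⟨-, rfl⟩ | ⟨rfl, rfl⟩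
    · exact hne rfl
    · exact G.irrefl ha
  exact hc _ ((G.mem_edgeSet).mpr ha) _ ((G.mem_edgeSet).mpr hb) hedge
    ⟨v, Sym2.mem_mk_left _ _, Sym2.mem_mk_left _ _⟩ hab

lemma le_max_getD {S : Finset ℕ} {x : ℕ} (hx : x ∈ S) : x ≤ S.max.getD 0 := by
  obtain ⟨M, hM⟩ := S.max_of_mem hx
  have := Finset.le_max hx
  rw [hM] at this ⊢
  exact_mod_cast this

lemma min_getD_le {S : Finset ℕ} {x : ℕ} (hx : x ∈ S) : S.min.getD 0 ≤ x := by
  obtain ⟨M, hM⟩ := S.min_of_mem hx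
  have := Finset.min_le hx
  rw [hM] at this ⊢
  exact_mod_cast this

lemma spec_inl {n : ℕ} (hn : 2 ≤ n) (i : Fin n) :
    vSpectrum (Kprime n) (col n) (Sum.inl i) = Finset.Icc 1 n := by
  have hn0 : 0 < n := by omega
  apply Finset.eq_of_subset_of_card_le
  · intro k hk
    simp only [vSpectrum, Finset.mem_image, Finset.mem_filter, Finset.mem_univ, true_and] at hk
    obtain ⟨u, hu, rfl⟩ := hk
    rw [adj_inl] at hu
    rcases hu with ⟨j, rfl, -⟩ | ⟨-, rfl⟩
    · have := Nat.mod_lt (i.val + j.val + 1) hn0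
      simp only [col_mk, colf, Finset.mem_Icc]
      omega
    · simp only [col_mk, colf, Finset.mem_Icc]
      omega
  · rw [card_vSpectrum _ _ _ (col_proper hn), card_nbhd_inl hn, Nat.card_Icc]
    omega

lemma spec_inr {n : ℕ} (hn : 2 ≤ n) (j : Fin n) (hj : j.val ≠ n - 1) :
    vSpectrum (Kprime n) (col n) (Sum.inr (Sum.inl j)) = Finset.Icc 1 n := by
  have hn0 : 0 < n := by omega
  apply Finset.eq_of_subset_of_card_le
  · intro k hk
    simp only [vSpectrum, Finset.mem_image, Finset.mem_filter, Finset.mem_univ, true_and] at hk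
    obtain ⟨u, hu, rfl⟩ := hk
    rw [adj_inr] at hu
    rcases hu with ⟨i, rfl, -⟩ | ⟨h, rfl⟩
    · have := Nat.mod_lt (i.val + j.val + 1) hn0
      simp only [col_mk, colf, Finset.mem_Icc]
      omega
    · exact absurd h hj
  · rw [card_vSpectrum _ _ _ (col_proper hn), card_nbhd_inr hn, Nat.card_Icc]
    omega

lemma spec_inr_last {n : ℕ} (hn : 2 ≤ n) (j : Fin n) (hj : j.val = n - 1) :
    vSpectrum (Kprime n) (col n) (Sum.inr (Sum.inl j)) =
      insert (n + 1) (Finset.Icc 1 (n - 1)) := by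
  apply Finset.eq_of_subset_of_card_le
  · intro k hk
    simp only [vSpectrum, Finset.mem_image, Finset.mem_filter, Finset.mem_univ, true_and] at hk
    obtain ⟨u, hu, rfl⟩ := hk
    rw [adj_inr] at hu
    rcases hu with ⟨i, rfl, h⟩ | ⟨-, rfl⟩
    · have hi : i.val < n - 1 := by
        have := i.isLt
        rcases Nat.lt_or_ge i.val (n - 1) with h2 | h2
        · exact h2
        · exact absurd ⟨by omega, hj⟩ h
      have e : (i.val + j.val + 1) % n = i.val := by
        have : i.val + j.val + 1 = n + i.val := by omega
        rw [this, Nat.add_mod_left, Nat.mod_eq_of_lt i.isLt]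
      simp only [col_mk, colf, Finset.mem_insert, Finset.mem_Icc, e]
      omega
    · simp only [col_mk, colf, Finset.mem_insert, Finset.mem_Icc]
      exact Or.inl trivial
  · rw [card_vSpectrum _ _ _ (col_proper hn), card_nbhd_inr hn,
      Finset.card_insert_of_notMem (by simp only [Finset.mem_Icc]; omega), Nat.card_Icc]
    omega

lemma spec_w {n : ℕ} (hn : 2 ≤ n) :
    vSpectrum (Kprime n) (col n) (Sum.inr (Sum.inr ())) = {n, n + 1} := by
  rw [vSpectrum, nbhd_w hn]
  rw [Finset.image_insert, Finset.image_singleton]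
  rfl

lemma setDef_Icc {n : ℕ} (hn : 1 ≤ n) : setDef (Finset.Icc 1 n) = 0 := by
  rw [setDef, max_getD_eq (m := n) (by simp [hn]) (fun x hx => (Finset.mem_Icc.mp hx).2),
    min_getD_eq (m := 1) (by simp [hn]) (fun x hx => (Finset.mem_Icc.mp hx).1), Nat.card_Icc]
  omega

lemma setDef_last {n : ℕ} (hn : 2 ≤ n) : setDef (insert (n + 1) (Finset.Icc 1 (n - 1))) = 1 := by
  have hmax : (insert (n + 1) (Finset.Icc 1 (n - 1))).max.getD 0 = n + 1 := by
    apply max_getD_eq (Finset.mem_insert_self _ _)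
    intro x hx
    rcases Finset.mem_insert.mp hx with rfl | hx
    · omega
    · have := (Finset.mem_Icc.mp hx).2; omega
  have hmin : (insert (n + 1) (Finset.Icc 1 (n - 1))).min.getD 0 = 1 := by
    apply min_getD_eq (Finset.mem_insert_of_mem (Finset.mem_Icc.mpr ⟨le_refl 1, by omega⟩))
    intro x hx
    rcases Finset.mem_insert.mp hx with rfl | hx
    · omega
    · exact (Finset.mem_Icc.mp hx).1
  rw [setDef, hmax, hmin,
    Finset.card_insert_of_notMem (by simp only [Finset.mem_Icc]; omega), Nat.card_Icc]
  omega

lemma setDef_w {n : ℕ} (hn : 2 ≤ n) : setDef ({n, n + 1} : Finset ℕ) = 0 := by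
  have hmax : ({n, n + 1} : Finset ℕ).max.getD 0 = n + 1 := by
    apply max_getD_eq (by simp)
    intro x hx
    rcases Finset.mem_insert.mp hx with rfl | hx
    · omega
    · simp only [Finset.mem_singleton] at hx; omega
  have hmin : ({n, n + 1} : Finset ℕ).min.getD 0 = n := by
    apply min_getD_eq (by simp)
    intro x hx
    rcases Finset.mem_insert.mp hx with rfl | hx
    · omega
    · simp only [Finset.mem_singleton] at hx; omega
  rw [setDef, hmax, hmin, Finset.card_insert_of_notMem (by simp), Finset.card_singleton]
  omega

lemma colDef_col {n : ℕ} (hn : 2 ≤ n) : colDef (Kprime n) (col n) = 1 := by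
  rw [colDef, Fintype.sum_sum_type, Fintype.sum_sum_type]
  have h1 : ∀ i : Fin n, setDef (vSpectrum (Kprime n) (col n) (Sum.inl i)) = 0 := fun i => by
    rw [spec_inl hn i, setDef_Icc (by omega)]
  have h3 : ∑ u : Unit, setDef (vSpectrum (Kprime n) (col n) (Sum.inr (Sum.inr u))) = 0 := by
    have : ∑ u : Unit, setDef (vSpectrum (Kprime n) (col n) (Sum.inr (Sum.inr u))) =
        setDef (vSpectrum (Kprime n) (col n) (Sum.inr (Sum.inr ()))) := by
      simp
    rw [this, spec_w hn, setDef_w hn]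
  rw [Finset.sum_eq_zero (fun i _ => h1 i), h3]
  have h2 : ∑ j : Fin n, setDef (vSpectrum (Kprime n) (col n) (Sum.inr (Sum.inl j))) = 1 := by
    rw [Finset.sum_eq_single_of_mem (⟨n - 1, by omega⟩ : Fin n) (Finset.mem_univ _)]
    · rw [spec_inr_last hn _ rfl, setDef_last hn]
    · intro j _ hj
      have : j.val ≠ n - 1 := fun h => hj (Fin.ext h)
      rw [spec_inr hn j this, setDef_Icc (by omega)]
  omega

lemma even_card_of_invol {α : Type*} [DecidableEq α] (s : Finset α) (g : α → α)
    (h1 : ∀ a ∈ s, g a ∈ s) (h2 : ∀ a ∈ s, g (g a) = a) (h3 : ∀ a ∈ s, g a ≠ a) :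
    Even s.card := by
  generalize hcard : s.card = m
  induction m using Nat.strong_induction_on generalizing s with
  | _ m ih =>
    rcases s.eq_empty_or_nonempty with rfl | ⟨a, ha⟩
    · simp only [Finset.card_empty] at hcard
      rw [← hcard]
      exact Even.zero
    · have hga : g a ∈ s := h1 a ha
      have hgane : g a ≠ a := h3 a ha
      set s' := (s.erase a).erase (g a) with hs'
      have hmem : ∀ b, b ∈ s' ↔ b ∈ s ∧ b ≠ a ∧ b ≠ g a := by
        intro b
        simp only [hs', Finset.mem_erase]
        tauto
      have hm2 : 2 ≤ m := by
        rw [← hcard]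
        have : ({g a, a} : Finset α) ⊆ s := by
          intro x hx
          rcases Finset.mem_insert.mp hx with rfl | hx
          · exact hga
          · rw [Finset.mem_singleton] at hx; subst hx; exact ha
        calc 2 = ({g a, a} : Finset α).card := by
                  rw [Finset.card_insert_of_notMem (by simpa using hgane)]; rfl
          _ ≤ s.card := Finset.card_le_card this
      have hcard' : s'.card = m - 2 := by
        rw [hs', Finset.card_erase_of_mem (Finset.mem_erase.mpr ⟨hgane, hga⟩),
          Finset.card_erase_of_mem ha, hcard]
        omega
      have hsub : ∀ b ∈ s', g b ∈ s' := by
        intro b hb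
        rw [hmem] at hb ⊢
        obtain ⟨hbs, hba, hbga⟩ := hb
        refine ⟨h1 b hbs, ?_, ?_⟩
        · intro h
          exact hbga (by rw [← h2 b hbs, h])
        · intro h
          have : g (g b) = g (g a) := by rw [h]
          rw [h2 b hbs, h2 a ha] at this
          exact hba this
      have := ih (m - 2) (by omega) s' hsub
        (fun b hb => h2 b ((hmem b).mp hb).1) (fun b hb => h3 b ((hmem b).mp hb).1) hcard'
      obtain ⟨k, hk⟩ := this
      exact ⟨k + 1, by omega⟩

lemma no_interval {n : ℕ} (hn : 2 ≤ n) (c : Sym2 (Fin n ⊕ Fin n ⊕ Unit) → ℕ)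
    (hc : IsProperEdgeColoring (Kprime n) c) : colDef (Kprime n) c ≠ 0 := by
  intro h0
  have hn0 : 0 < n := by omega
  -- every vertex has zero deficiency
  have hz : ∀ v, setDef (vSpectrum (Kprime n) c v) = 0 := by
    intro v
    exact Finset.sum_eq_zero_iff.mp h0 v (Finset.mem_univ v)
  -- degree bound
  have hdeg : ∀ v : Fin n ⊕ Fin n ⊕ Unit,
      (Finset.univ.filter (fun u => (Kprime n).Adj v u)).card ≤ n := by
    rintro (i | j | u)
    · rw [card_nbhd_inl hn]
    · rw [card_nbhd_inr hn]
    · rw [nbhd_w hn]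
      calc ({Sum.inl (⟨n - 1, by omega⟩ : Fin n),
              Sum.inr (Sum.inl (⟨n - 1, by omega⟩ : Fin n))} :
              Finset (Fin n ⊕ Fin n ⊕ Unit)).card ≤ 2 := Finset.card_insert_le _ _ |>.trans (by simp)
        _ ≤ n := hn
  -- residues are proper
  have hres : ∀ (v b b' : Fin n ⊕ Fin n ⊕ Unit), (Kprime n).Adj v b → (Kprime n).Adj v b' →
      b ≠ b' → c s(v, b) % n ≠ c s(v, b') % n := by
    intro v b b' hb hb' hne heq
    have hm1 : c s(v, b) ∈ vSpectrum (Kprime n) c v := mem_vSpectrum _ _ hb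
    have hm2 : c s(v, b') ∈ vSpectrum (Kprime n) c v := mem_vSpectrum _ _ hb'
    have hcard : (vSpectrum (Kprime n) c v).card ≤ n := by
      rw [card_vSpectrum _ _ _ hc]; exact hdeg v
    have hsd := hz v
    rw [setDef] at hsd
    have hgap : (vSpectrum (Kprime n) c v).max.getD 0 - (vSpectrum (Kprime n) c v).min.getD 0
        ≤ n - 1 := by
      have hpos : 0 < (vSpectrum (Kprime n) c v).card := Finset.card_pos.mpr ⟨_, hm1⟩
      omega
    have hx1 := le_max_getD hm1
    have hx2 := le_max_getD hm2
    have hy1 := min_getD_le hm1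
    have hy2 := min_getD_le hm2
    have hedge : s(v, b) ≠ s(v, b') := by
      intro h
      rw [Sym2.eq_iff] at h
      rcases h with ⟨-, rfl⟩ | ⟨rfl, rfl⟩
      · exact hne rfl
      · exact (Kprime n).irrefl hb
    have hcne : c s(v, b) ≠ c s(v, b') :=
      hc _ (((Kprime n).mem_edgeSet).mpr hb) _ (((Kprime n).mem_edgeSet).mpr hb') hedge
        ⟨v, Sym2.mem_mk_left _ _, Sym2.mem_mk_left _ _⟩
    rcases Nat.lt_or_ge (c s(v, b)) (c s(v, b')) with hlt | hge
    · have hdvd : n ∣ c s(v, b') - c s(v, b) := (Nat.modEq_iff_dvd' hlt.le).mp heq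
      have := Nat.le_of_dvd (by omega) hdvd
      omega
    · have hlt : c s(v, b') < c s(v, b) := by omega
      have hdvd : n ∣ c s(v, b) - c s(v, b') := (Nat.modEq_iff_dvd' hlt.le).mp heq.symm
      have := Nat.le_of_dvd (by omega) hdvd
      omega
  have huniq : ∀ (v b b' : Fin n ⊕ Fin n ⊕ Unit), (Kprime n).Adj v b → (Kprime n).Adj v b' →
      c s(v, b) % n = c s(v, b') % n → b = b' := by
    intro v b b' hb hb' heq
    by_contra hne
    exact hres v b b' hb hb' hne heq
  -- surjectivity of residues at full-degree vertices
  have hsurj : ∀ v : Fin n ⊕ Fin n ⊕ Unit,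
      (Finset.univ.filter (fun u => (Kprime n).Adj v u)).card = n →
      ∀ k, k < n → ∃ u, (Kprime n).Adj v u ∧ c s(v, u) % n = k := by
    intro v hv k hk
    set N := Finset.univ.filter (fun u => (Kprime n).Adj v u) with hN
    have hinj : Set.InjOn (fun u => c s(v, u) % n) N := by
      intro a ha b hb hab
      simp only [hN, Finset.mem_coe, Finset.mem_filter, Finset.mem_univ, true_and] at ha hb
      exact huniq v a b ha hb hab
    have himcard : (N.image (fun u => c s(v, u) % n)).card = n := by
      rw [Finset.card_image_of_injOn hinj, hv]
    have hsub : N.image (fun u => c s(v, u) % n) ⊆ Finset.range n := by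
      intro x hx
      obtain ⟨u, -, rfl⟩ := Finset.mem_image.mp hx
      exact Finset.mem_range.mpr (Nat.mod_lt _ hn0)
    have heq : N.image (fun u => c s(v, u) % n) = Finset.range n :=
      Finset.eq_of_subset_of_card_le hsub (by rw [himcard, Finset.card_range])
    have : k ∈ N.image (fun u => c s(v, u) % n) := by
      rw [heq]; exact Finset.mem_range.mpr hk
    obtain ⟨u, hu, hcu⟩ := Finset.mem_image.mp this
    simp only [hN, Finset.mem_filter, Finset.mem_univ, true_and] at hu
    exact ⟨u, hu, hcu⟩
  set last : Fin n := ⟨n - 1, by omega⟩ with hlast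
  set w : Fin n ⊕ Fin n ⊕ Unit := Sum.inr (Sum.inr ()) with hw
  have hadjlw : (Kprime n).Adj (Sum.inl last) w := by
    rw [adj_inl]
    exact Or.inr ⟨rfl, rfl⟩
  set k₀ := c s(Sum.inl last, w) % n with hk₀
  have hk₀lt : k₀ < n := Nat.mod_lt _ hn0
  -- the k₀-neighbor function
  set g : (Fin n ⊕ Fin n ⊕ Unit) → (Fin n ⊕ Fin n ⊕ Unit) := fun v =>
    if h : ∃ u, (Kprime n).Adj v u ∧ c s(v, u) % n = k₀ then h.choose else v with hg
  have hgspec : ∀ v, (∃ u, (Kprime n).Adj v u ∧ c s(v, u) % n = k₀) →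
      (Kprime n).Adj v (g v) ∧ c s(v, g v) % n = k₀ := by
    intro v h
    rw [hg]
    simp only [dif_pos h]
    exact h.choose_spec
  set S : Finset (Fin n ⊕ Fin n ⊕ Unit) :=
    Finset.univ \ {w, Sum.inl last} with hS
  have hmemS : ∀ v, v ∈ S ↔ v ≠ w ∧ v ≠ Sum.inl last := by
    intro v
    simp only [hS, Finset.mem_sdiff, Finset.mem_univ, true_and, Finset.mem_insert,
      Finset.mem_singleton]
    tauto
  have hSex : ∀ v ∈ S, ∃ u, (Kprime n).Adj v u ∧ c s(v, u) % n = k₀ := by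
    intro v hv
    rw [hmemS] at hv
    rcases v with i | j | u
    · exact hsurj _ (card_nbhd_inl hn i) k₀ hk₀lt
    · exact hsurj _ (card_nbhd_inr hn j) k₀ hk₀lt
    · exact absurd rfl hv.1
  have hgS : ∀ v ∈ S, g v ∈ S := by
    intro v hv
    obtain ⟨hadj, hcol⟩ := hgspec v (hSex v hv)
    rw [hmemS] at hv ⊢
    constructor
    · -- g v ≠ w
      intro hgw
      have hadj' : (Kprime n).Adj w v := by rw [← hgw]; exact hadj.symm
      have heqc : c s(w, v) % n = c s(w, Sum.inl last) % n := by
        have e1 : s(w, v) = s(v, g v) := by rw [hgw, Sym2.eq_swap]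
        have e2 : s(w, Sum.inl last) = s(Sum.inl last, w) := Sym2.eq_swap
        rw [e1, e2, hcol, hk₀]
      have := huniq w v (Sum.inl last) hadj' hadjlw.symm heqc
      exact hv.2 this
    · -- g v ≠ inl last
      intro hgl
      have hadj' : (Kprime n).Adj (Sum.inl last) v := by rw [← hgl]; exact hadj.symm
      have heqc : c s(Sum.inl last, v) % n = c s(Sum.inl last, w) % n := by
        have e1 : s(Sum.inl last, v) = s(v, g v) := by rw [hgl, Sym2.eq_swap]
        rw [e1, hcol, hk₀]
      have := huniq (Sum.inl last) v w hadj' hadjlw heqc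
      exact hv.1 this
  have hgg : ∀ v ∈ S, g (g v) = v := by
    intro v hv
    obtain ⟨hadj, hcol⟩ := hgspec v (hSex v hv)
    obtain ⟨hadj2, hcol2⟩ := hgspec (g v) (hSex (g v) (hgS v hv))
    apply huniq (g v) (g (g v)) v hadj2 hadj.symm
    rw [hcol2, Sym2.eq_swap, hcol]
  have hgne : ∀ v ∈ S, g v ≠ v := by
    intro v hv h
    obtain ⟨hadj, -⟩ := hgspec v (hSex v hv)
    rw [h] at hadj
    exact (Kprime n).irrefl hadj
  have heven : Even S.card := even_card_of_invol S g hgS hgg hgne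
  have hScard : S.card = 2 * n - 1 := by
    rw [hS, Finset.card_sdiff_of_subset (by intro x _; exact Finset.mem_univ x)]
    have h2 : ({w, Sum.inl last} : Finset (Fin n ⊕ Fin n ⊕ Unit)).card = 2 := by
      rw [Finset.card_insert_of_notMem (by simp [hw]), Finset.card_singleton]
    have hu : (Finset.univ : Finset (Fin n ⊕ Fin n ⊕ Unit)).card = n + (n + 1) := by
      simp [Finset.card_univ]
    rw [h2, hu]
    omega
  rw [hScard, Nat.even_iff] at heven
  omega

theorem stmt_4 (n : ℕ) (hn : 2 ≤ n) : graphDef (Kprime n) = 1 := by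
  have h1 : (1 : ℕ) ∈ {d | ∃ c, IsProperEdgeColoring (Kprime n) c ∧ colDef (Kprime n) c = d} :=
    ⟨col n, col_proper hn, colDef_col hn⟩
  have h0 : (0 : ℕ) ∉ {d | ∃ c, IsProperEdgeColoring (Kprime n) c ∧ colDef (Kprime n) c = d} := by
    rintro ⟨c, hc, hd⟩
    exact no_interval hn c hc hd
  rw [graphDef]
  refine le_antisymm (Nat.sInf_le h1) ?_
  rcases Nat.eq_zero_or_pos
    (sInf {d | ∃ c, IsProperEdgeColoring (Kprime n) c ∧ colDef (Kprime n) c = d}) with h | h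
  · rcases Nat.sInf_eq_zero.mp h with h' | h'
    · exact absurd h' h0
    · rw [h'] at h1
      exact absurd h1 (Set.notMem_empty 1)
  · exact h
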